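/- Let B be the open unit ball in ℝ³ and c > 0. Let q ∈ L¹(ℝ³) and define the Born data u_b(p) = ∫_{ℝ³} e^{ic⟨p,y⟩} q(y) dy for p ∈ B. Let ψ ∈ L²(B) be real-valued and α ∈ ℂ \ {0} satisfy ∫_B e^{ic⟨x,y⟩} ψ(y) dy = α ψ(x) for almost every x ∈ B, and define the extension Ψ(y) = α^{-1} ∫_B e^{ic⟨x,y⟩} ψ(x) dx for y ∈ ℝ³. Then α^{-1} ∫_B u_b(p) ψ(p) dp = ∫_{ℝ³} q(y) Ψ(y) dy. In particular, if q = q_i + q_o with q_i supported in B and q_o supported in ℝ³ \\ closure(B), then α^{-1} ⟨u_b, ψ⟩_{L²(B)} = ⟨q_i, Ψ⟩_{L²(ℝ³)} + ⟨q_o, Ψ⟩_{L²(ℝ³)}, where on B the extension Ψ agrees with ψ. (This is equation (3.15) of the paper, the basis of the localized imaging technique.) -/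

import Mathlib

open MeasureTheory
open scoped RealInnerProductSpace

/-- **Equation (3.15): basis of the localized imaging technique.** Let `q ∈ L¹(ℝ³)` with Born
data `u_b(p) = ∫_{ℝ³} e^{ic⟨p,y⟩} q(y) dy`, and let `ψ ∈ L²(B)` be a real-valued eigenfunction
of the restricted Fourier integral operator with nonzero eigenvalue `α`, extended to `ℝ³` by
`Ψ(y) = α⁻¹ ∫_B e^{ic⟨x,y⟩} ψ(x) dx`. Then `α⁻¹ ∫_B u_b ψ = ∫_{ℝ³} q Ψ`; in particular, for a
decomposition `q = q_i + q_o` with `q_i` supported in `B` and `q_o` supported in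
`ℝ³ \ closure(B)`, `α⁻¹ ⟨u_b, ψ⟩_{L²(B)} = ⟨q_i, Ψ⟩_{L²(ℝ³)} + ⟨q_o, Ψ⟩_{L²(ℝ³)}`. -/
theorem localized_imaging_identity (c : ℝ) (hc : 0 < c)
    (q qi qo : EuclideanSpace ℝ (Fin 3) → ℂ)
    (hq : Integrable q (volume : Measure (EuclideanSpace ℝ (Fin 3))))
    (hqi : Integrable qi (volume : Measure (EuclideanSpace ℝ (Fin 3))))
    (hqo : Integrable qo (volume : Measure (EuclideanSpace ℝ (Fin 3))))
    (hdecomp : q = qi + qo)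
    (hsuppi : ∀ x, x ∉ Metric.ball (0 : EuclideanSpace ℝ (Fin 3)) 1 → qi x = 0)
    (hsuppo : ∀ x, x ∈ Metric.closedBall (0 : EuclideanSpace ℝ (Fin 3)) 1 → qo x = 0)
    (ub : EuclideanSpace ℝ (Fin 3) → ℂ)
    (hub : ∀ p, ub p = ∫ y : EuclideanSpace ℝ (Fin 3),
      Complex.exp (Complex.I * c * ⟪p, y⟫) * q y)
    (ψ : EuclideanSpace ℝ (Fin 3) → ℝ) (α : ℂ) (hα : α ≠ 0)
    (hψ : MemLp ψ 2 (volume.restrict (Metric.ball (0 : EuclideanSpace ℝ (Fin 3)) 1)))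
    (heig : ∀ᵐ x ∂(volume.restrict (Metric.ball (0 : EuclideanSpace ℝ (Fin 3)) 1)),
      (∫ y in Metric.ball (0 : EuclideanSpace ℝ (Fin 3)) 1,
        Complex.exp (Complex.I * c * ⟪x, y⟫) * (ψ y : ℂ)) = α * (ψ x : ℂ))
    (Ψ : EuclideanSpace ℝ (Fin 3) → ℂ)
    (hΨ : ∀ y, Ψ y = α⁻¹ * ∫ x in Metric.ball (0 : EuclideanSpace ℝ (Fin 3)) 1,
      Complex.exp (Complex.I * c * ⟪x, y⟫) * (ψ x : ℂ)) :
    α⁻¹ * (∫ p in Metric.ball (0 : EuclideanSpace ℝ (Fin 3)) 1, ub p * (ψ p : ℂ))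
        = ∫ y : EuclideanSpace ℝ (Fin 3), q y * Ψ y
      ∧ α⁻¹ * (∫ p in Metric.ball (0 : EuclideanSpace ℝ (Fin 3)) 1, ub p * (ψ p : ℂ))
        = (∫ y : EuclideanSpace ℝ (Fin 3), qi y * Ψ y)
          + ∫ y : EuclideanSpace ℝ (Fin 3), qo y * Ψ y := by
  classical
  set B := Metric.ball (0 : EuclideanSpace ℝ (Fin 3)) 1 with hBdef
  haveI : IsFiniteMeasure ((volume : Measure (EuclideanSpace ℝ (Fin 3))).restrict B) := by
    constructor
    rw [Measure.restrict_apply_univ]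
    exact measure_ball_lt_top
  have hψInt : Integrable (fun p => (ψ p : ℂ)) (volume.restrict B) :=
    (hψ.integrable one_le_two).ofReal
  have hφnorm : ∀ p y : EuclideanSpace ℝ (Fin 3),
      ‖Complex.exp (Complex.I * c * ⟪p, y⟫)‖ = 1 := by
    intro p y
    simp [Complex.norm_exp, Complex.mul_re]
  have hφcont : Continuous (fun z : EuclideanSpace ℝ (Fin 3) × EuclideanSpace ℝ (Fin 3) =>
      Complex.exp (Complex.I * c * ⟪z.1, z.2⟫)) :=
    Complex.continuous_exp.comp
      (continuous_const.mul (Complex.continuous_ofReal.comp continuous_inner))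
  -- integrability on the product for Fubini
  have hFint : Integrable
      (fun z : EuclideanSpace ℝ (Fin 3) × EuclideanSpace ℝ (Fin 3) =>
        Complex.exp (Complex.I * c * ⟪z.1, z.2⟫) * q z.2 * (ψ z.1 : ℂ))
      ((volume.restrict B).prod volume) := by
    have hbase : Integrable
        (fun z : EuclideanSpace ℝ (Fin 3) × EuclideanSpace ℝ (Fin 3) =>
          (ψ z.1 : ℂ) * q z.2) ((volume.restrict B).prod volume) :=
      hψInt.mul_prod hq
    have h2 := hbase.bdd_mul hφcont.aestronglyMeasurable
      (Filter.Eventually.of_forall fun z => le_of_eq (hφnorm z.1 z.2))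
    exact h2.congr (Filter.Eventually.of_forall fun z => by ring)
  set S : EuclideanSpace ℝ (Fin 3) → ℂ := fun y =>
    ∫ x in B, Complex.exp (Complex.I * c * ⟪x, y⟫) * (ψ x : ℂ) with hSdef
  have hSΨ : ∀ y, S y = α * Ψ y := by
    intro y
    rw [hΨ y, ← mul_assoc, mul_inv_cancel₀ hα, one_mul]
  have key : (∫ p in B, ub p * (ψ p : ℂ)) = ∫ y, q y * S y := by
    calc (∫ p in B, ub p * (ψ p : ℂ))
        = ∫ p in B, ∫ y, Complex.exp (Complex.I * c * ⟪p, y⟫) * q y * (ψ p : ℂ) := by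
          refine integral_congr_ae (Filter.Eventually.of_forall fun p => ?_)
          dsimp only
          rw [hub p, ← integral_mul_const]
      _ = ∫ y, ∫ p in B, Complex.exp (Complex.I * c * ⟪p, y⟫) * q y * (ψ p : ℂ) :=
          integral_integral_swap hFint
      _ = ∫ y, q y * S y := by
          refine integral_congr_ae (Filter.Eventually.of_forall fun y => ?_)
          show _ = q y * S y
          rw [hSdef]
          dsimp only
          rw [← integral_const_mul]
          exact integral_congr_ae (Filter.Eventually.of_forall fun p => by dsimp only; ring)
  have main : α⁻¹ * (∫ p in B, ub p * (ψ p : ℂ))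
      = ∫ y, q y * Ψ y := by
    rw [key]
    have : ∫ y, q y * S y = α * ∫ y, q y * Ψ y := by
      rw [← integral_const_mul]
      refine integral_congr_ae (Filter.Eventually.of_forall fun y => ?_)
      show q y * S y = α * (q y * Ψ y)
      rw [hSΨ y]; ring
    rw [this, ← mul_assoc, inv_mul_cancel₀ hα, one_mul]
  refine ⟨main, ?_⟩
  -- measurability and boundedness of Ψ
  have hScont : Continuous S := by
    refine continuous_of_dominated (bound := fun x => ‖(ψ x : ℂ)‖)
      (fun y => ?_) (fun y => Filter.Eventually.of_forall fun x => ?_)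
      hψInt.norm (Filter.Eventually.of_forall fun x => ?_)
    · exact ((hφcont.comp (continuous_id.prodMk continuous_const)).aestronglyMeasurable).mul
        hψInt.aestronglyMeasurable
    · rw [norm_mul, hφnorm, one_mul]
    · exact Complex.continuous_exp.comp
        ((continuous_const.mul (Complex.continuous_ofReal.comp
          (continuous_const.inner continuous_id)))) |>.mul continuous_const
  have hΨeq : Ψ = fun y => α⁻¹ * S y := funext fun y => hΨ y
  have hΨmeas : AEStronglyMeasurable Ψ (volume : Measure (EuclideanSpace ℝ (Fin 3))) := by
    rw [hΨeq]
    exact (continuous_const.mul hScont).aestronglyMeasurable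
  have hΨbdd : ∃ C, ∀ y, ‖Ψ y‖ ≤ C := by
    refine ⟨‖α⁻¹‖ * ∫ x in B, ‖(ψ x : ℂ)‖, fun y => ?_⟩
    rw [hΨ y, norm_mul]
    refine mul_le_mul_of_nonneg_left ?_ (norm_nonneg _)
    refine (norm_integral_le_integral_norm _).trans (le_of_eq ?_)
    exact integral_congr_ae (Filter.Eventually.of_forall fun x => by
      dsimp only; rw [norm_mul, hφnorm, one_mul])
  have hqiΨ : Integrable (fun y => qi y * Ψ y) (volume : Measure (EuclideanSpace ℝ (Fin 3))) := by
    have := hqi.bdd_mul hΨmeas (Filter.Eventually.of_forall hΨbdd.choose_spec)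
    exact this.congr (Filter.Eventually.of_forall fun y => mul_comm _ _)
  have hqoΨ : Integrable (fun y => qo y * Ψ y) (volume : Measure (EuclideanSpace ℝ (Fin 3))) := by
    have := hqo.bdd_mul hΨmeas (Filter.Eventually.of_forall hΨbdd.choose_spec)
    exact this.congr (Filter.Eventually.of_forall fun y => mul_comm _ _)
  rw [main, hdecomp]
  simp_rw [Pi.add_apply, add_mul]
  exact integral_add hqiΨ hqoΨ
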